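/- For all p ∈ (0,1) and all η ∈ [0, 1−p], one has h_m(p,η) ≤ kl(p+η‖p). -/

import Mathlib

open Real

/-- Bernoulli Kullback–Leibler divergence `kl(a‖b)`. -/
noncomputable def klBer (a b : ℝ) : ℝ :=
  a * Real.log (a / b) + (1 - a) * Real.log ((1 - a) / (1 - b))

/-- `h_m(p,η) = η² / (2 (p + η/3)(1 - p - η/3))`. -/
noncomputable def hm (p η : ℝ) : ℝ :=
  η ^ 2 / (2 * (p + η / 3) * (1 - p - η / 3))

/-- **Lemma 8**: for all `p ∈ (0,1)` and `η ∈ [0, 1-p]`,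
`h_m(p,η) ≤ kl(p+η‖p)`. -/

lemma pade_log {t : ℝ} (ht : 1 ≤ t) : 2 * (t - 1) / (t + 1) ≤ Real.log t := by
  set g : ℝ → ℝ := fun y => Real.log y + 4 * (y + 1)⁻¹ with hg
  have hd : ∀ x ∈ Set.Ici (1:ℝ), HasDerivAt g (x⁻¹ + 4 * (-1 / (x + 1) ^ 2)) x := by
    intro x hx
    have hx0 : (0:ℝ) < x := lt_of_lt_of_le one_pos hx
    exact (Real.hasDerivAt_log hx0.ne').add
      ((((hasDerivAt_id x).add_const 1).inv (by positivity)).const_mul 4)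
  have hmono : MonotoneOn g (Set.Ici 1) := by
    apply monotoneOn_of_deriv_nonneg (convex_Ici 1)
    · intro x hx
      exact (hd x hx).continuousAt.continuousWithinAt
    · intro x hx
      exact ((hd x (interior_subset hx)).differentiableAt).differentiableWithinAt
    · intro x hx
      rw [interior_Ici] at hx
      have hx1 : (1:ℝ) < x := hx
      rw [(hd x (le_of_lt hx1)).deriv]
      have h1 : (0:ℝ) < x := by linarith
      have h2 : (0:ℝ) < x + 1 := by linarith
      rw [div_eq_mul_inv, ← sub_nonneg]
      have : x⁻¹ + 4 * (-1 * ((x+1)^2)⁻¹) - 0 = ((x+1)^2 - 4*x) * (x⁻¹ * ((x+1)^2)⁻¹) := by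
        field_simp
        ring
      nlinarith [sq_nonneg (x - 1), inv_pos.mpr h1, inv_pos.mpr (pow_pos h2 2),
        mul_pos (inv_pos.mpr h1) (inv_pos.mpr (pow_pos h2 2)), sq_nonneg (x-1)]
  have key : g 1 ≤ g t := hmono (Set.mem_Ici.mpr le_rfl) (Set.mem_Ici.mpr ht) ht
  have hg1 : g 1 = 2 := by norm_num [hg]
  have ht1 : (0:ℝ) < t + 1 := by linarith
  have : 2 * (t - 1) / (t + 1) = 2 - 4 * (t+1)⁻¹ := by field_simp; ring
  rw [this]
  rw [hg1, hg] at key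
  simp only at key
  linarith

lemma log_sub_log {a b : ℝ} (hb : 0 < b) (hab : b ≤ a) :
    2 * (a - b) / (a + b) ≤ Real.log a - Real.log b := by
  have ha : 0 < a := lt_of_lt_of_le hb hab
  have h := pade_log (t := a / b) ((one_le_div hb).mpr hab)
  rw [Real.log_div ha.ne' hb.ne'] at h
  have : 2 * (a - b) / (a + b) = 2 * (a/b - 1) / (a/b + 1) := by
    rw [div_eq_div_iff (by linarith) (by positivity)]
    field_simp
  rw [this]; exact h

theorem hm_le_kl (p : ℝ) (hp : p ∈ Set.Ioo (0 : ℝ) 1)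
    (η : ℝ) (hη : η ∈ Set.Icc (0 : ℝ) (1 - p)) :
    hm p η ≤ klBer (p + η) p := by
  obtain ⟨hp0, hp1⟩ := hp
  obtain ⟨hη0, hη1⟩ := hη
  set F : ℝ → ℝ := fun x => (p + x) * Real.log (p + x) - (p + x) * Real.log p +
    ((1 - p - x) * Real.log (1 - p - x) - (1 - p - x) * Real.log (1 - p)) -
    x ^ 2 / (2 * (p + x / 3) * (1 - p - x / 3)) with hF
  suffices h : 0 ≤ F η by
    have he : klBer (p + η) p = (p + η) * Real.log (p + η) - (p + η) * Real.log p +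
        ((1 - p - η) * Real.log (1 - p - η) - (1 - p - η) * Real.log (1 - p)) := by
      unfold klBer
      have h1 : 1 - (p + η) = 1 - p - η := by ring
      rcases eq_or_lt_of_le hη1 with h2 | h2
      · have h3 : 1 - p - η = 0 := by linarith
        rw [h1, h3, Real.log_div (by linarith) hp0.ne']
        simp
        ring
      · rw [h1, Real.log_div (by linarith) hp0.ne',
          Real.log_div (by linarith) (by linarith : (1:ℝ) - p ≠ 0)]
        ring
    have hhm : hm p η = η ^ 2 / (2 * (p + η / 3) * (1 - p - η / 3)) := rfl
    have : F η = klBer (p + η) p - hm p η := by rw [he, hF, hhm]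
    linarith [this ▸ h]
  have hF0 : F 0 = 0 := by simp [hF]
  have hmono : MonotoneOn F (Set.Icc 0 (1 - p)) := by
    have hder : ∀ x ∈ Set.Ioo (0:ℝ) (1 - p), HasDerivAt F
        ((1 * Real.log (p + x) + (p + x) * (1 / (p + x)) - 1 * Real.log p) +
         ((-1) * Real.log (1 - p - x) + (1 - p - x) * ((-1) / (1 - p - x)) -
          (-1) * Real.log (1 - p)) -
         ((↑2 * x ^ (2 - 1)) * (2 * (p + x / 3) * (1 - p - x / 3)) -
           x ^ 2 * ((2 * (1 / 3)) * (1 - p - x / 3) + (2 * (p + x / 3)) * (-(1 / 3)))) /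
          (2 * (p + x / 3) * (1 - p - x / 3)) ^ 2) x := by
      intro x hx
      obtain ⟨hx0, hx1⟩ := hx
      have hpx : (0:ℝ) < p + x := by linarith
      have hqx : (0:ℝ) < 1 - p - x := by linarith
      have hu : (0:ℝ) < p + x / 3 := by linarith
      have hv : (0:ℝ) < 1 - p - x / 3 := by linarith
      have hid : HasDerivAt (fun y : ℝ => p + y) 1 x := (hasDerivAt_id x).const_add p
      have hid2 : HasDerivAt (fun y : ℝ => 1 - p - y) (-1) x := by
        simpa using (hasDerivAt_id x).const_sub (1 - p)
      have d1 : HasDerivAt (fun y : ℝ => (p + y) * Real.log (p + y))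
          (1 * Real.log (p + x) + (p + x) * (1 / (p + x))) x :=
        hid.mul (hid.log hpx.ne')
      have d2 : HasDerivAt (fun y : ℝ => (p + y) * Real.log p) (1 * Real.log p) x :=
        hid.mul_const _
      have d3 : HasDerivAt (fun y : ℝ => (1 - p - y) * Real.log (1 - p - y))
          ((-1) * Real.log (1 - p - x) + (1 - p - x) * ((-1) / (1 - p - x))) x :=
        hid2.mul (hid2.log hqx.ne')
      have d4 : HasDerivAt (fun y : ℝ => (1 - p - y) * Real.log (1 - p))
          ((-1) * Real.log (1 - p)) x := hid2.mul_const _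
      have ha : HasDerivAt (fun y : ℝ => p + y / 3) (1 / 3) x := by
        simpa using ((hasDerivAt_id x).div_const 3).const_add p
      have hb : HasDerivAt (fun y : ℝ => 1 - p - y / 3) (-(1 / 3)) x := by
        simpa using ((hasDerivAt_id x).div_const 3).const_sub (1 - p)
      have hden : HasDerivAt (fun y : ℝ => 2 * (p + y / 3) * (1 - p - y / 3))
          ((2 * (1 / 3)) * (1 - p - x / 3) + (2 * (p + x / 3)) * (-(1 / 3))) x :=
        (ha.const_mul 2).mul hb
      have d5 : HasDerivAt (fun y : ℝ => y ^ 2 / (2 * (p + y / 3) * (1 - p - y / 3)))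
          (((↑2 * x ^ (2 - 1)) * (2 * (p + x / 3) * (1 - p - x / 3)) -
            x ^ 2 * ((2 * (1 / 3)) * (1 - p - x / 3) + (2 * (p + x / 3)) * (-(1 / 3)))) /
           (2 * (p + x / 3) * (1 - p - x / 3)) ^ 2) x :=
        (hasDerivAt_pow 2 x).div hden (by positivity)
      exact ((d1.sub d2).add (d3.sub d4)).sub d5
    apply monotoneOn_of_deriv_nonneg (convex_Icc 0 (1 - p))
    · -- continuity
      have c1 : Continuous fun x : ℝ => (p + x) * Real.log (p + x) :=
        Real.continuous_mul_log.comp (continuous_const.add continuous_id)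
      have c2 : Continuous fun x : ℝ => (1 - p - x) * Real.log (1 - p - x) :=
        Real.continuous_mul_log.comp (continuous_const.sub continuous_id)
      apply ContinuousOn.sub
      · exact (((c1.continuousOn.sub (by fun_prop)).add
          (c2.continuousOn.sub (by fun_prop))))
      · apply ContinuousOn.div (by fun_prop) (by fun_prop)
        intro x hx
        obtain ⟨hx0, hx1⟩ := hx
        have hu : (0:ℝ) < p + x / 3 := by linarith
        have hv : (0:ℝ) < 1 - p - x / 3 := by linarith
        positivity
    · intro x hx
      rw [interior_Icc] at hx
      exact ((hder x hx).differentiableAt).differentiableWithinAt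
    · intro x hx
      rw [interior_Icc] at hx
      rw [(hder x hx).deriv]
      obtain ⟨hx0, hx1⟩ := hx
      have hpx : (0:ℝ) < p + x := by linarith
      have hqx : (0:ℝ) < 1 - p - x := by linarith
      have hu : (0:ℝ) < p + x / 3 := by linarith
      have hv : (0:ℝ) < 1 - p - x / 3 := by linarith
      have L1 : 2 * x / (2 * p + x) ≤ Real.log (p + x) - Real.log p := by
        have := log_sub_log hp0 (by linarith : p ≤ p + x)
        have e : 2 * ((p + x) - p) / ((p + x) + p) = 2 * x / (2 * p + x) := by
          ring_nf
        linarith [e ▸ this]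
      have L2 : 2 * x / (2 - 2 * p - x) ≤ Real.log (1 - p) - Real.log (1 - p - x) := by
        have := log_sub_log hqx (by linarith : 1 - p - x ≤ 1 - p)
        have e : 2 * ((1 - p) - (1 - p - x)) / ((1 - p) + (1 - p - x)) =
            2 * x / (2 - 2 * p - x) := by ring_nf
        linarith [e ▸ this]
      have key : ((↑2 * x ^ (2 - 1)) * (2 * (p + x / 3) * (1 - p - x / 3)) -
            x ^ 2 * ((2 * (1 / 3)) * (1 - p - x / 3) + (2 * (p + x / 3)) * (-(1 / 3)))) /
          (2 * (p + x / 3) * (1 - p - x / 3)) ^ 2 ≤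
          2 * x / (2 * p + x) + 2 * x / (2 - 2 * p - x) := by
        have h1 : (0:ℝ) < 2 * p + x := by linarith
        have h2 : (0:ℝ) < 2 - 2 * p - x := by linarith
        have hsum : 2 * x / (2 * p + x) + 2 * x / (2 - 2 * p - x) =
            4 * x / ((2 * p + x) * (2 - 2 * p - x)) := by
          rw [div_add_div _ _ h1.ne' h2.ne', div_eq_div_iff (by positivity) (by positivity)]
          ring
        rw [hsum]
        rw [div_le_div_iff₀ (by positivity) (by positivity)]
        norm_num
        nlinarith [sq_nonneg (x * (p - (1 - p - x))), sq_nonneg (x * p),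
          sq_nonneg (x * (1 - p - x)), sq_nonneg (x ^ 2),
          mul_nonneg (mul_nonneg (mul_nonneg hx0.le hx0.le) hx0.le) hp0.le,
          mul_nonneg (mul_nonneg (mul_nonneg hx0.le hx0.le) hx0.le) hqx.le]
      have hcancel : (p + x) * (1 / (p + x)) = 1 := by field_simp
      have hcancel2 : (1 - p - x) * ((-1) / (1 - p - x)) = -1 := by field_simp
      rw [hcancel, hcancel2]
      linarith
  have h01 : (0:ℝ) ∈ Set.Icc (0:ℝ) (1 - p) := ⟨le_refl 0, by linarith⟩
  have := hmono h01 ⟨hη0, hη1⟩ hη0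
  linarith [hF0 ▸ this]
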